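/- Let u and v be nontrivial real-valued solutions of the same equation (τ₀ - λ)w = 0 on (a,b), with Prüfer angles θ_u, θ_v, and define N(u,v)(x) = ⌈(θ_v(x) - θ_u(x))/π⌉ - ⌊(θ_v(a) - θ_u(a))/π⌋ - 1. If u and v are linearly dependent, then N(u,v)(x) = -1 for all x ∈ (a,b); if u and v are linearly independent, then N(u,v)(x) = 0 for all x ∈ (a,b). -/

import Mathlib

open Real Set

private lemma const_of_deriv0 {F : ℝ → ℝ} {a b : ℝ}
    (hF : ∀ y ∈ Ico a b, HasDerivAt F 0 y) : ∀ x ∈ Ico a b, F x = F a := by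
  intro x hx
  have hsub : Icc a x ⊆ Ico a b := fun y hy => ⟨hy.1, lt_of_le_of_lt hy.2 hx.2⟩
  have := constant_of_has_deriv_right_zero (f := F) (a := a) (b := x)
    (fun y hy => ((hF y (hsub hy)).continuousAt).continuousWithinAt)
    (fun y hy => ((hF y (hsub ⟨hy.1, hy.2.le⟩)).hasDerivWithinAt))
  exact this x ⟨hx.1, le_refl x⟩

private lemma int_valued_const {g : ℝ → ℝ} {a x : ℝ} (hax : a ≤ x)
    (hg : ContinuousOn g (Icc a x)) (hint : ∀ y ∈ Icc a x, ∃ n : ℤ, g y = n) :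
    g x = g a := by
  by_contra h
  obtain ⟨m, hm⟩ := hint a ⟨le_refl a, hax⟩
  obtain ⟨n, hn⟩ := hint x ⟨hax, le_refl x⟩
  have hmn : m ≠ n := by rintro rfl; exact h (hn.trans hm.symm)
  rcases lt_or_gt_of_ne hmn with h1 | h1
  · have hm1 : ((m : ℝ) + 1 ≤ (n : ℝ)) := by exact_mod_cast h1
    have hmem : ((m : ℝ) + 1/2) ∈ Icc (g a) (g x) := by
      rw [hm, hn]; constructor <;> linarith
    obtain ⟨y, hy, hgy⟩ := intermediate_value_Icc hax hg hmem
    obtain ⟨k, hk⟩ := hint y hy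
    rw [hk] at hgy
    have : (2 * k : ℝ) = 2 * m + 1 := by linarith
    have : (2 * k : ℤ) = 2 * m + 1 := by exact_mod_cast this
    omega
  · have hm1 : ((n : ℝ) + 1 ≤ (m : ℝ)) := by exact_mod_cast h1
    have hmem : ((n : ℝ) + 1/2) ∈ Icc (g x) (g a) := by
      rw [hm, hn]; constructor <;> linarith
    obtain ⟨y, hy, hgy⟩ := intermediate_value_Icc' hax hg hmem
    obtain ⟨k, hk⟩ := hint y hy
    rw [hk] at hgy
    have : (2 * k : ℝ) = 2 * n + 1 := by linarith
    have : (2 * k : ℤ) = 2 * n + 1 := by exact_mod_cast this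
    omega

private lemma floor_const_of_no_int {g : ℝ → ℝ} {a x : ℝ} (hax : a ≤ x)
    (hg : ContinuousOn g (Icc a x)) (hni : ∀ y ∈ Icc a x, ∀ n : ℤ, g y ≠ n) :
    ⌊g x⌋ = ⌊g a⌋ := by
  by_contra h
  rcases lt_or_gt_of_ne h with h1 | h1
  · -- ⌊g x⌋ < ⌊g a⌋ : value ⌊g x⌋ + 1 between g x and g a
    have hv1 : g x < (⌊g x⌋ : ℝ) + 1 := Int.lt_floor_add_one _
    have hv2 : ((⌊g x⌋ : ℝ) + 1) ≤ g a := by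
      have : (⌊g x⌋ + 1 : ℤ) ≤ ⌊g a⌋ := h1
      calc ((⌊g x⌋ : ℝ) + 1) = ((⌊g x⌋ + 1 : ℤ) : ℝ) := by push_cast; ring
        _ ≤ (⌊g a⌋ : ℝ) := by exact_mod_cast this
        _ ≤ g a := Int.floor_le _
    obtain ⟨y, hy, hgy⟩ := intermediate_value_Icc' hax hg ⟨hv1.le, hv2⟩
    exact hni y hy (⌊g x⌋ + 1) (by rw [hgy]; push_cast; ring)
  · have hv1 : g a < (⌊g a⌋ : ℝ) + 1 := Int.lt_floor_add_one _
    have hv2 : ((⌊g a⌋ : ℝ) + 1) ≤ g x := by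
      have : (⌊g a⌋ + 1 : ℤ) ≤ ⌊g x⌋ := h1
      calc ((⌊g a⌋ : ℝ) + 1) = ((⌊g a⌋ + 1 : ℤ) : ℝ) := by push_cast; ring
        _ ≤ (⌊g x⌋ : ℝ) := by exact_mod_cast this
        _ ≤ g x := Int.floor_le _
    obtain ⟨y, hy, hgy⟩ := intermediate_value_Icc hax hg ⟨hv1.le, hv2⟩
    exact hni y hy (⌊g a⌋ + 1) (by rw [hgy]; push_cast; ring)

theorem stmt_6 (a b lam : ℝ) (hab : a < b) (p₀ q₀ r₀ : ℝ → ℝ)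
    (u v pu pv ρu ρv θu θv : ℝ → ℝ)
    (hp : ∀ x ∈ Ico a b, 0 < p₀ x) (hr : ∀ x ∈ Ico a b, 0 < r₀ x)
    (hu : ∀ x ∈ Ico a b, HasDerivAt u (pu x / p₀ x) x)
    (hpu : ∀ x ∈ Ico a b, HasDerivAt pu ((q₀ x - lam * r₀ x) * u x) x)
    (hv : ∀ x ∈ Ico a b, HasDerivAt v (pv x / p₀ x) x)
    (hpv : ∀ x ∈ Ico a b, HasDerivAt pv ((q₀ x - lam * r₀ x) * v x) x)
    (hρu : ∀ x ∈ Ico a b, 0 < ρu x) (hρv : ∀ x ∈ Ico a b, 0 < ρv x)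
    (hus : ∀ x ∈ Ico a b, u x = ρu x * Real.sin (θu x))
    (huc : ∀ x ∈ Ico a b, pu x = ρu x * Real.cos (θu x))
    (hvs : ∀ x ∈ Ico a b, v x = ρv x * Real.sin (θv x))
    (hvc : ∀ x ∈ Ico a b, pv x = ρv x * Real.cos (θv x))
    (hθu : ContinuousOn θu (Ico a b)) (hθv : ContinuousOn θv (Ico a b)) :
    ((∃ c : ℝ, ∀ x ∈ Ico a b, v x = c * u x) →
        ∀ x ∈ Ioo a b, ⌈(θv x - θu x) / π⌉ - ⌊(θv a - θu a) / π⌋ - 1 = -1) ∧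
    (¬ (∃ c : ℝ, ∀ x ∈ Ico a b, v x = c * u x) →
        ∀ x ∈ Ioo a b, ⌈(θv x - θu x) / π⌉ - ⌊(θv a - θu a) / π⌋ - 1 = 0) := by
  have hπ : (0:ℝ) < π := Real.pi_pos
  have ha : a ∈ Ico a b := ⟨le_refl a, hab⟩
  set W : ℝ → ℝ := fun y => u y * pv y - pu y * v y with hWdef
  -- W has zero derivative on Ico a b
  have hWd : ∀ y ∈ Ico a b, HasDerivAt W 0 y := by
    intro y hy
    have h1 := ((hu y hy).mul (hpv y hy)).sub ((hpu y hy).mul (hv y hy))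
    have hp0 : p₀ y ≠ 0 := (hp y hy).ne'
    have he : pu y / p₀ y * pv y + u y * ((q₀ y - lam * r₀ y) * v y) -
        ((q₀ y - lam * r₀ y) * u y * v y + pu y * (pv y / p₀ y)) = 0 := by
      field_simp; ring
    rw [he] at h1
    exact h1
  have hWconst : ∀ y ∈ Ico a b, W y = W a := const_of_deriv0 hWd
  -- Prüfer form of W
  have hWpr : ∀ y ∈ Ico a b, W y = ρu y * ρv y * Real.sin (θu y - θv y) := by
    intro y hy
    simp only [hWdef]
    rw [hus y hy, huc y hy, hvs y hy, hvc y hy, Real.sin_sub]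
    ring
  -- Denominator positivity
  have hDpos : ∀ y ∈ Ico a b, 0 < u y * u y + pu y * pu y := by
    intro y hy
    have h2 : u y * u y + pu y * pu y = ρu y ^ 2 := by
      rw [hus y hy, huc y hy]
      have := Real.sin_sq_add_cos_sq (θu y)
      nlinarith [this]
    rw [h2]; exact pow_pos (hρu y hy) 2
  -- Key: W a = 0 → linear dependence
  have key : W a = 0 → ∃ c : ℝ, ∀ x ∈ Ico a b, v x = c * u x := by
    intro hWa
    have hW0 : ∀ y ∈ Ico a b, u y * pv y = pu y * v y := by
      intro y hy
      have := (hWconst y hy).trans hWa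
      simp only [hWdef] at this
      linarith
    set f : ℝ → ℝ := fun y => (u y * v y + pu y * pv y) / (u y * u y + pu y * pu y)
      with hfdef
    have hfv : ∀ y ∈ Ico a b, v y = f y * u y := by
      intro y hy
      have hD := (hDpos y hy).ne'
      simp only [hfdef]
      rw [div_mul_eq_mul_div, eq_div_iff hD]
      linear_combination (-(pu y)) * (hW0 y hy)
    have hfpv : ∀ y ∈ Ico a b, pv y = f y * pu y := by
      intro y hy
      have hD := (hDpos y hy).ne'
      simp only [hfdef]
      rw [div_mul_eq_mul_div, eq_div_iff hD]
      linear_combination (u y) * (hW0 y hy)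
    have hfd : ∀ y ∈ Ico a b, HasDerivAt f 0 y := by
      intro y hy
      have hD := (hDpos y hy).ne'
      have hp0 : p₀ y ≠ 0 := (hp y hy).ne'
      have hN : HasDerivAt (fun z => u z * v z + pu z * pv z)
          (pu y / p₀ y * v y + u y * (pv y / p₀ y) +
           ((q₀ y - lam * r₀ y) * u y * pv y + pu y * ((q₀ y - lam * r₀ y) * v y))) y :=
        ((hu y hy).mul (hv y hy)).add ((hpu y hy).mul (hpv y hy))
      have hDd : HasDerivAt (fun z => u z * u z + pu z * pu z)
          (pu y / p₀ y * u y + u y * (pu y / p₀ y) +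
           ((q₀ y - lam * r₀ y) * u y * pu y + pu y * ((q₀ y - lam * r₀ y) * u y))) y :=
        ((hu y hy).mul (hu y hy)).add ((hpu y hy).mul (hpu y hy))
      have hq := hN.div hDd hD
      have hc1 := hfv y hy
      have hc2 := hfpv y hy
      set c := f y with hcdef
      have hE : ((pu y / p₀ y * v y + u y * (pv y / p₀ y) +
           ((q₀ y - lam * r₀ y) * u y * pv y + pu y * ((q₀ y - lam * r₀ y) * v y))) *
            (u y * u y + pu y * pu y) -
          (u y * v y + pu y * pv y) *
            (pu y / p₀ y * u y + u y * (pu y / p₀ y) +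
             ((q₀ y - lam * r₀ y) * u y * pu y + pu y * ((q₀ y - lam * r₀ y) * u y)))) /
          (u y * u y + pu y * pu y) ^ 2 = 0 := by
        rw [hc1, hc2]
        field_simp
        ring
      rw [hE] at hq
      exact hq
    have hfc : ∀ y ∈ Ico a b, f y = f a := const_of_deriv0 hfd
    exact ⟨f a, fun y hy => by rw [hfv y hy, hfc y hy]⟩
  constructor
  · -- dependent case
    rintro ⟨c, hc⟩ x hx
    have hxI : x ∈ Ico a b := ⟨hx.1.le, hx.2⟩
    -- pv = c * pu on Ioo via uniqueness of derivatives
    have hWx : W x = 0 := by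
      have hpv' : pv x = c * pu x := by
        have hev : v =ᶠ[nhds x] fun z => c * u z := by
          filter_upwards [isOpen_Ioo.mem_nhds hx] with z hz
          exact hc z ⟨hz.1.le, hz.2⟩
        have h2 : HasDerivAt v (c * (pu x / p₀ x)) x :=
          (((hu x hxI).const_mul c)).congr_of_eventuallyEq hev
        have h3 := (hv x hxI).unique h2
        have hp0 : p₀ x ≠ 0 := (hp x hxI).ne'
        field_simp at h3
        linarith [h3]
      simp only [hWdef]
      rw [hpv', hc x hxI]
      ring
    have hWa : W a = 0 := (hWconst x hxI).symm.trans hWx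
    -- θv - θu is an integer multiple of π throughout
    have hint : ∀ y ∈ Ico a b, ∃ n : ℤ, (θv y - θu y) / π = n := by
      intro y hy
      have hWy : W y = 0 := (hWconst y hy).trans hWa
      rw [hWpr y hy] at hWy
      have hsin : Real.sin (θu y - θv y) = 0 := by
        have h1 := (hρu y hy).ne'
        have h2 := (hρv y hy).ne'
        rcases mul_eq_zero.mp hWy with h | h
        · rcases mul_eq_zero.mp h with h | h
          · exact absurd h h1
          · exact absurd h h2
        · exact h
      obtain ⟨n, hn⟩ := Real.sin_eq_zero_iff.mp hsin
      exact ⟨-n, by push_cast; field_simp; linarith⟩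
    have hg : ContinuousOn (fun y => (θv y - θu y) / π) (Ico a b) :=
      (hθv.sub hθu).div_const π
    have hsubI : Icc a x ⊆ Ico a b := fun y hy => ⟨hy.1, lt_of_le_of_lt hy.2 hx.2⟩
    have hgc : (θv x - θu x) / π = (θv a - θu a) / π :=
      int_valued_const hx.1.le (hg.mono hsubI) (fun y hy => hint y (hsubI hy))
    obtain ⟨n, hn⟩ := hint a ha
    rw [hgc, hn, Int.ceil_intCast, Int.floor_intCast]
    ring
  · -- independent case
    intro hndep x hx
    have hxI : x ∈ Ico a b := ⟨hx.1.le, hx.2⟩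
    have hWa : W a ≠ 0 := fun h => hndep (key h)
    have hni : ∀ y ∈ Ico a b, ∀ n : ℤ, (θv y - θu y) / π ≠ n := by
      intro y hy n hn
      have hWy : W y ≠ 0 := fun h => hWa ((hWconst y hy).symm.trans h)
      apply hWy
      rw [hWpr y hy]
      have : θu y - θv y = (-n : ℤ) * π := by
        have : θv y - θu y = n * π := by
          field_simp at hn; linarith
        push_cast; linarith
      rw [this, Real.sin_int_mul_pi]
      ring
    have hg : ContinuousOn (fun y => (θv y - θu y) / π) (Ico a b) :=
      (hθv.sub hθu).div_const π
    have hsubI : Icc a x ⊆ Ico a b := fun y hy => ⟨hy.1, lt_of_le_of_lt hy.2 hx.2⟩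
    have hfl : ⌊(θv x - θu x) / π⌋ = ⌊(θv a - θu a) / π⌋ :=
      floor_const_of_no_int hx.1.le (hg.mono hsubI) (fun y hy => hni y (hsubI hy))
    have hceil : ⌈(θv x - θu x) / π⌉ = ⌊(θv x - θu x) / π⌋ + 1 := by
      have h1 : (⌊(θv x - θu x) / π⌋ : ℝ) < (θv x - θu x) / π :=
        lt_of_le_of_ne (Int.floor_le _) (fun h => hni x hxI _ h.symm)
      have h2 : ((θv x - θu x) / π) ≤ (⌈(θv x - θu x) / π⌉ : ℝ) := Int.le_ceil _
      have h3 : (⌊(θv x - θu x) / π⌋ : ℝ) < (⌈(θv x - θu x) / π⌉ : ℝ) := lt_of_lt_of_le h1 h2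
      have h4 : ⌊(θv x - θu x) / π⌋ < ⌈(θv x - θu x) / π⌉ := by exact_mod_cast h3
      have h5 := Int.ceil_le_floor_add_one ((θv x - θu x) / π)
      omega
    rw [hceil, hfl]
    ring
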